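/- Let π₀ be the uniform policy on Y (π₀(y|x) = 1/K for all x, y, where K = |Y|) and consider the DPO loss L_DPO(θ) of the softmax-parametrized policy π_θ with preference probabilities p*(x,y₁,y₂) = σ(r(x,y₁) − r(x,y₂)). Fix ε₀ > 0 and set c₀ = σ(ε₀/τ)·σ(−ε₀/τ) − 1 ∈ (−1, 0). For θ : X × Y → ℝ and x ∈ X, let Ω(θ,x) be the set of pairs (y₁,y₂) ∈ Y × Y such that both |log(p*(x,y₁,y₂)/(1 − p*(x,y₁,y₂)))| ≥ ε₀ and |log(π_θ(y₁|x)·π_ref(y₂|x)/(π_θ(y₂|x)·π_ref(y₁|x)))| ≥ ε₀ hold, and set γ(θ,x) = |Ω(θ,x)|/K². Let γ ∈ [0,1]. Then at every θ for which γ(θ,x) ≥ γ for all x ∈ X, the second derivative of L_DPO satisfies |D²L_DPO(θ)(z,z)| ≤ (4·(γ·c₀ + 1)/τ²)·Σ_{x,y} z(x,y)² for every z : X × Y → ℝ. -/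

import Mathlib

noncomputable def dpoSig (t : ℝ) : ℝ := (1 + Real.exp (-t))⁻¹
noncomputable def dpoQ (t : ℝ) : ℝ := (Real.exp t + 2 + Real.exp (-t))⁻¹
noncomputable def dpoPhi (p t : ℝ) : ℝ :=
  p * Real.log (1 + Real.exp (-t)) + (1 - p) * Real.log (1 + Real.exp t)

lemma dpoPhi_hasDerivAt (p t : ℝ) :
    HasDerivAt (dpoPhi p) (dpoSig t - p) t := by
  have h1 : HasDerivAt (fun t : ℝ => Real.exp (-t)) (-Real.exp (-t)) t := by
    simpa [Function.comp_def] using ((Real.hasDerivAt_exp (-t)).comp t ((hasDerivAt_id t).neg))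
  have h2 : HasDerivAt (fun t : ℝ => 1 + Real.exp (-t)) (-Real.exp (-t)) t := by
    simpa using h1.const_add 1
  have h3 : HasDerivAt (fun t : ℝ => Real.log (1 + Real.exp (-t)))
      (-Real.exp (-t) / (1 + Real.exp (-t))) t := h2.log (by positivity)
  have h4 : HasDerivAt (fun t : ℝ => 1 + Real.exp t) (Real.exp t) t := by
    simpa using (Real.hasDerivAt_exp t).const_add 1
  have h5 : HasDerivAt (fun t : ℝ => Real.log (1 + Real.exp t))
      (Real.exp t / (1 + Real.exp t)) t := h4.log (by positivity)
  have h6 := (h3.const_mul p).add (h5.const_mul (1 - p))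
  have he : Real.exp (-t) = (Real.exp t)⁻¹ := Real.exp_neg t
  have hpos : 0 < Real.exp t := Real.exp_pos t
  refine h6.congr_deriv ?_
  symm
  rw [dpoSig, he]
  field_simp
  ring

lemma dpoSig_hasDerivAt (p t : ℝ) :
    HasDerivAt (fun t => dpoSig t - p) (dpoQ t) t := by
  have h1 : HasDerivAt (fun t : ℝ => Real.exp (-t)) (-Real.exp (-t)) t := by
    simpa [Function.comp_def] using ((Real.hasDerivAt_exp (-t)).comp t ((hasDerivAt_id t).neg))
  have h2 : HasDerivAt (fun t : ℝ => 1 + Real.exp (-t)) (-Real.exp (-t)) t := by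
    simpa using h1.const_add 1
  have h := (h2.inv (by positivity)).sub_const p
  have he : Real.exp (-t) = (Real.exp t)⁻¹ := Real.exp_neg t
  have hpos : 0 < Real.exp t := Real.exp_pos t
  refine h.congr_deriv ?_
  symm
  rw [dpoQ, he]
  rw [show (1:ℝ) + (Real.exp t)⁻¹ = (Real.exp t + 1) / Real.exp t by field_simp]
  field_simp
  ring

lemma dpoQ_pos (t : ℝ) : 0 < dpoQ t := by rw [dpoQ]; positivity

lemma dpoQ_le (s t : ℝ) (h : |s| ≤ |t|) : dpoQ t ≤ dpoQ s := by
  rw [dpoQ, dpoQ]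
  have hc : Real.cosh s ≤ Real.cosh t := Real.cosh_le_cosh.2 h
  have hs := Real.cosh_eq s; have ht := Real.cosh_eq t
  apply inv_anti₀ (by positivity)
  nlinarith

lemma dpoQ_le_one (t : ℝ) : dpoQ t ≤ 1 := by
  have h0 : dpoQ 0 = 4⁻¹ := by norm_num [dpoQ]
  have := dpoQ_le 0 t (by simpa using abs_nonneg t)
  rw [h0] at this; linarith



set_option maxHeartbeats 2000000 in
theorem dpo_data_selection_smoothness_aux
    {X Y : Type*} [Fintype X] [Fintype Y] [Nonempty X] [Nonempty Y]
    (r : X → Y → ℝ) (τ : ℝ) (hτ : 0 < τ)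
    (D : X → ℝ) (hD0 : ∀ x, 0 ≤ D x) (hD1 : ∑ x : X, D x = 1)
    (πref π₀ : X → Y → ℝ)
    (hπref0 : ∀ x y, 0 < πref x y) (hπref1 : ∀ x, ∑ y : Y, πref x y = 1)
    (hπ₀uniform : ∀ x y, π₀ x y = 1 / (Fintype.card Y : ℝ))
    (σ : ℝ → ℝ) (hσ : ∀ t, σ t = (1 + Real.exp (-t))⁻¹)
    (pstar : X → Y → Y → ℝ)
    (hpstar : ∀ x y₁ y₂, pstar x y₁ y₂ = σ (r x y₁ - r x y₂))
    (πθ : (X × Y → ℝ) → X → Y → ℝ)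
    (hπθ : ∀ θ x y, πθ θ x y = Real.exp (θ (x, y)) / ∑ y' : Y, Real.exp (θ (x, y')))
    (hbar : (X × Y → ℝ) → X → Y → Y → ℝ)
    (hhbar : ∀ θ x y₁ y₂, hbar θ x y₁ y₂ =
      (1 / τ) * (Real.log (πθ θ x y₁ / πref x y₁) - Real.log (πθ θ x y₂ / πref x y₂)))
    (L : (X × Y → ℝ) → ℝ)
    (hL : ∀ θ, L θ = -∑ x : X, D x * ∑ y₁ : Y, ∑ y₂ : Y,
      π₀ x y₁ * π₀ x y₂ *
        (pstar x y₁ y₂ * Real.log (σ (hbar θ x y₁ y₂)) +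
         (1 - pstar x y₁ y₂) * Real.log (σ (-(hbar θ x y₁ y₂)))))
    (ε₀ : ℝ) (hε₀ : 0 < ε₀)
    (c₀ : ℝ) (hc₀ : c₀ = σ (ε₀ / τ) * σ (-(ε₀ / τ)) - 1)
    (hc₀mem : -1 < c₀ ∧ c₀ < 0)
    (Ω : (X × Y → ℝ) → X → Finset (Y × Y))
    (hΩ : ∀ θ x (p : Y × Y), p ∈ Ω θ x ↔
      ε₀ ≤ |Real.log (pstar x p.1 p.2 / (1 - pstar x p.1 p.2))| ∧
      ε₀ ≤ |Real.log (πθ θ x p.1 * πref x p.2 / (πθ θ x p.2 * πref x p.1))|)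
    (γ : ℝ) (hγ0 : 0 ≤ γ) (hγ1 : γ ≤ 1)
    (θ : X × Y → ℝ)
    (hγθ : ∀ x, γ ≤ ((Ω θ x).card : ℝ) / (Fintype.card Y : ℝ) ^ 2) :
    ∀ z : X × Y → ℝ,
      |fderiv ℝ (fderiv ℝ L) θ z z| ≤
        (4 * (γ * c₀ + 1) / τ ^ 2) * ∑ p : X × Y, z p ^ 2 := by
  intro z
  classical
  have hτ' : τ ≠ 0 := ne_of_gt hτ
  have hKpos : (0:ℝ) < (Fintype.card Y : ℝ) := by
    exact_mod_cast Fintype.card_pos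
  have hSpos : ∀ (θ' : X × Y → ℝ) (x : X), 0 < ∑ y' : Y, Real.exp (θ' (x, y')) := by
    intro θ' x
    exact Finset.sum_pos (fun y _ => Real.exp_pos _) Finset.univ_nonempty
  have hπθpos : ∀ θ' x y, 0 < πθ θ' x y := by
    intro θ' x y; rw [hπθ]; exact div_pos (Real.exp_pos _) (hSpos θ' x)
  set A : (X × Y → ℝ) → X → Y → Y → ℝ := fun θ' x y₁ y₂ =>
    (θ' (x, y₁) - θ' (x, y₂) + (Real.log (πref x y₂) - Real.log (πref x y₁))) / τ with hA
  have hlogπθ : ∀ (θ' : X × Y → ℝ) x y, Real.log (πθ θ' x y / πref x y)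
      = θ' (x, y) - Real.log (∑ y' : Y, Real.exp (θ' (x, y'))) - Real.log (πref x y) := by
    intro θ' x y
    rw [hπθ, Real.log_div (ne_of_gt (div_pos (Real.exp_pos _) (hSpos θ' x)))
      (ne_of_gt (hπref0 x y)),
      Real.log_div (Real.exp_ne_zero _) (ne_of_gt (hSpos θ' x)), Real.log_exp]
  have hbarA : ∀ (θ' : X × Y → ℝ) x y₁ y₂, hbar θ' x y₁ y₂ = A θ' x y₁ y₂ := by
    intro θ' x y₁ y₂
    rw [hhbar, hlogπθ, hlogπθ]
    simp only [hA]
    field_simp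
    ring
  have hLfun : L = fun θ' => ∑ x : X, ∑ y₁ : Y, ∑ y₂ : Y,
      (D x * ((Fintype.card Y : ℝ) ^ 2)⁻¹) * dpoPhi (pstar x y₁ y₂) (A θ' x y₁ y₂) := by
    funext θ'
    rw [hL, ← Finset.sum_neg_distrib]
    refine Finset.sum_congr rfl fun x _ => ?_
    rw [Finset.mul_sum, ← Finset.sum_neg_distrib]
    refine Finset.sum_congr rfl fun y₁ _ => ?_
    rw [Finset.mul_sum, ← Finset.sum_neg_distrib]
    refine Finset.sum_congr rfl fun y₂ _ => ?_
    rw [hπ₀uniform, hπ₀uniform, hσ, hσ, neg_neg, hbarA, Real.log_inv, Real.log_inv]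
    rw [dpoPhi]
    have hK0 : (Fintype.card Y : ℝ) ≠ 0 := ne_of_gt hKpos
    field_simp
    ring
  set ℓ : X → Y → Y → ((X × Y → ℝ) →L[ℝ] ℝ) := fun x y₁ y₂ =>
    τ⁻¹ • ((ContinuousLinearMap.proj (x, y₁) : (X × Y → ℝ) →L[ℝ] ℝ)
      - ContinuousLinearMap.proj (x, y₂)) with hℓ
  have hℓapp : ∀ x y₁ y₂ (v : X × Y → ℝ), ℓ x y₁ y₂ v = τ⁻¹ * (v (x, y₁) - v (x, y₂)) := by
    intro x y₁ y₂ v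
    simp [hℓ]
  have hAderiv : ∀ (θ' : X × Y → ℝ) x y₁ y₂,
      HasFDerivAt (fun u => A u x y₁ y₂) (ℓ x y₁ y₂) θ' := by
    intro θ' x y₁ y₂
    have hfun : (fun u : X × Y → ℝ => A u x y₁ y₂)
        = fun u => ℓ x y₁ y₂ u + (Real.log (πref x y₂) - Real.log (πref x y₁)) / τ := by
      funext u; rw [hℓapp]; simp only [hA]; field_simp
    rw [hfun]
    exact ((ℓ x y₁ y₂).hasFDerivAt).add_const _
  set G : (X × Y → ℝ) → ((X × Y → ℝ) →L[ℝ] ℝ) := fun θ' =>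
    ∑ x : X, ∑ y₁ : Y, ∑ y₂ : Y,
      (D x * ((Fintype.card Y : ℝ) ^ 2)⁻¹ * (dpoSig (A θ' x y₁ y₂) - pstar x y₁ y₂)) • ℓ x y₁ y₂
    with hGdef
  have hGd : ∀ θ', HasFDerivAt L (G θ') θ' := by
    intro θ'
    rw [hLfun, hGdef]
    refine HasFDerivAt.fun_sum fun x _ => HasFDerivAt.fun_sum fun y₁ _ =>
      HasFDerivAt.fun_sum fun y₂ _ => ?_
    have hphi := (dpoPhi_hasDerivAt (pstar x y₁ y₂) (A θ' x y₁ y₂)).comp_hasFDerivAt θ'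
      (hAderiv θ' x y₁ y₂)
    have h2 := hphi.const_mul (D x * ((Fintype.card Y : ℝ) ^ 2)⁻¹)
    have h3 : (D x * ((Fintype.card Y : ℝ) ^ 2)⁻¹ * (dpoSig (A θ' x y₁ y₂) - pstar x y₁ y₂))
          • ℓ x y₁ y₂
        = (D x * ((Fintype.card Y : ℝ) ^ 2)⁻¹)
          • ((dpoSig (A θ' x y₁ y₂) - pstar x y₁ y₂) • ℓ x y₁ y₂) := (smul_smul _ _ _).symm
    rw [h3]
    exact h2
  have hfderivL : fderiv ℝ L = G := funext fun θ' => (hGd θ').fderiv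
  set H : (X × Y → ℝ) →L[ℝ] ((X × Y → ℝ) →L[ℝ] ℝ) :=
    ∑ x : X, ∑ y₁ : Y, ∑ y₂ : Y,
      ((D x * ((Fintype.card Y : ℝ) ^ 2)⁻¹ * dpoQ (A θ x y₁ y₂)) • ℓ x y₁ y₂).smulRight
        (ℓ x y₁ y₂) with hHdef
  have hHderiv : HasFDerivAt G H θ := by
    rw [hGdef, hHdef]
    refine HasFDerivAt.fun_sum fun x _ => HasFDerivAt.fun_sum fun y₁ _ =>
      HasFDerivAt.fun_sum fun y₂ _ => ?_
    have hq := (dpoSig_hasDerivAt (pstar x y₁ y₂) (A θ x y₁ y₂)).comp_hasFDerivAt θ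
      (hAderiv θ x y₁ y₂)
    have hq2 := hq.const_mul (D x * ((Fintype.card Y : ℝ) ^ 2)⁻¹)
    have hq3 := hq2.smul_const (ℓ x y₁ y₂)
    have h3 : (D x * ((Fintype.card Y : ℝ) ^ 2)⁻¹ * dpoQ (A θ x y₁ y₂)) • ℓ x y₁ y₂
        = (D x * ((Fintype.card Y : ℝ) ^ 2)⁻¹) • (dpoQ (A θ x y₁ y₂) • ℓ x y₁ y₂) :=
      (smul_smul _ _ _).symm
    rw [h3]
    exact hq3
  have hsecond : fderiv ℝ (fderiv ℝ L) θ = H := by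
    rw [hfderivL]; exact hHderiv.fderiv
  rw [hsecond]
  have hHzz : H z z = ∑ x : X, ∑ y₁ : Y, ∑ y₂ : Y,
      D x * ((Fintype.card Y : ℝ) ^ 2)⁻¹ * dpoQ (A θ x y₁ y₂)
        * (τ⁻¹ * (z (x, y₁) - z (x, y₂))) ^ 2 := by
    rw [hHdef]
    simp only [ContinuousLinearMap.sum_apply, ContinuousLinearMap.smulRight_apply,
      ContinuousLinearMap.smul_apply, smul_eq_mul, hℓapp]
    refine Finset.sum_congr rfl fun x _ => Finset.sum_congr rfl fun y₁ _ =>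
      Finset.sum_congr rfl fun y₂ _ => ?_
    ring
  rw [hHzz]
  clear_value H G ℓ
  clear hsecond hHzz hHderiv hfderivL hGd hHdef hGdef hAderiv hℓapp hℓ hLfun H G ℓ
  have hc₀q : c₀ + 1 = dpoQ (ε₀ / τ) := by
    rw [hc₀, hσ, hσ, neg_neg, dpoQ, sub_add_cancel, ← mul_inv]
    congr 1
    have h1 : Real.exp (-(ε₀ / τ)) * Real.exp (ε₀ / τ) = 1 := by
      rw [← Real.exp_add]; simp
    linear_combination h1
  have hlogratio : ∀ x y₁ y₂,
      Real.log (πθ θ x y₁ * πref x y₂ / (πθ θ x y₂ * πref x y₁)) = τ * A θ x y₁ y₂ := by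
    intro x y₁ y₂
    have h1 : ∀ y, Real.log (πθ θ x y)
        = θ (x, y) - Real.log (∑ y' : Y, Real.exp (θ (x, y'))) := by
      intro y
      rw [hπθ, Real.log_div (Real.exp_ne_zero _) (ne_of_gt (hSpos θ x)), Real.log_exp]
    rw [Real.log_div (ne_of_gt (mul_pos (hπθpos θ x y₁) (hπref0 x y₂)))
        (ne_of_gt (mul_pos (hπθpos θ x y₂) (hπref0 x y₁))),
      Real.log_mul (ne_of_gt (hπθpos θ x y₁)) (ne_of_gt (hπref0 x y₂)),
      Real.log_mul (ne_of_gt (hπθpos θ x y₂)) (ne_of_gt (hπref0 x y₁)), h1, h1]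
    simp only [hA]
    field_simp
    ring
  have hQΩ : ∀ x (y₁ y₂ : Y), (y₁, y₂) ∈ Ω θ x → dpoQ (A θ x y₁ y₂) ≤ c₀ + 1 := by
    intro x y₁ y₂ hmem
    obtain ⟨-, h2⟩ := (hΩ θ x (y₁, y₂)).1 hmem
    have h2' : ε₀ ≤ |Real.log (πθ θ x y₁ * πref x y₂ / (πθ θ x y₂ * πref x y₁))| := h2
    rw [hlogratio, abs_mul, abs_of_pos hτ] at h2'
    rw [hc₀q]
    apply dpoQ_le
    rw [abs_of_pos (div_pos hε₀ hτ), div_le_iff₀ hτ]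
    calc ε₀ ≤ τ * |A θ x y₁ y₂| := h2'
      _ = |A θ x y₁ y₂| * τ := mul_comm _ _
  have h1γc : 0 ≤ 1 + γ * c₀ := by
    nlinarith [mul_nonneg hγ0 (by linarith [hc₀mem.1] : (0:ℝ) ≤ c₀ + 1)]
  have hc₀1pos : 0 < c₀ + 1 := by linarith [hc₀mem.1]
  set Z : X → ℝ := fun x => ∑ y : Y, z (x, y) ^ 2 with hZ
  have hZ0 : ∀ x, 0 ≤ Z x := fun x => Finset.sum_nonneg fun y _ => sq_nonneg _
  have hd2 : ∀ x (y₁ y₂ : Y), (z (x, y₁) - z (x, y₂)) ^ 2 ≤ 2 * Z x := by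
    intro x y₁ y₂
    by_cases hne : y₁ = y₂
    · subst hne; simpa using mul_nonneg (by norm_num : (0:ℝ) ≤ 2) (hZ0 x)
    · have hsub : z (x, y₁) ^ 2 + z (x, y₂) ^ 2 ≤ Z x := by
        have h := Finset.sum_le_sum_of_subset_of_nonneg
          (Finset.subset_univ ({y₁, y₂} : Finset Y))
          (fun y _ _ => sq_nonneg (z (x, y)))
        rw [Finset.sum_pair hne] at h
        exact h
      nlinarith [sq_nonneg (z (x, y₁) + z (x, y₂))]
  have hb : ∀ x, ∑ p : Y × Y, (if p ∈ Ω θ x then c₀ + 1 else 1)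
      = (Fintype.card Y : ℝ) ^ 2 + ((Ω θ x).card : ℝ) * c₀ := by
    intro x
    have h1 : ∀ p : Y × Y, (if p ∈ Ω θ x then c₀ + 1 else 1)
        = 1 + (if p ∈ Ω θ x then c₀ else 0) := by
      intro p; by_cases h : p ∈ Ω θ x <;> simp [h, add_comm]
    rw [Finset.sum_congr rfl fun p _ => h1 p, Finset.sum_add_distrib, Finset.sum_const,
      Finset.sum_ite_mem, Finset.univ_inter, Finset.sum_const]
    simp [Fintype.card_prod]
    push_cast
    ring
  have hΩcard : ∀ x, γ * (Fintype.card Y : ℝ) ^ 2 ≤ ((Ω θ x).card : ℝ) := by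
    intro x
    have h := hγθ x
    rw [le_div_iff₀ (by positivity)] at h
    exact h
  have hinner : ∀ x, ∑ y₁ : Y, ∑ y₂ : Y,
      D x * ((Fintype.card Y : ℝ) ^ 2)⁻¹ * dpoQ (A θ x y₁ y₂)
        * (τ⁻¹ * (z (x, y₁) - z (x, y₂))) ^ 2
      ≤ D x * (1 + γ * c₀) * (2 * τ⁻¹ ^ 2 * Z x) := by
    intro x
    have hw0 : 0 ≤ D x * ((Fintype.card Y : ℝ) ^ 2)⁻¹ :=
      mul_nonneg (hD0 x) (by positivity)
    calc ∑ y₁ : Y, ∑ y₂ : Y, D x * ((Fintype.card Y : ℝ) ^ 2)⁻¹ * dpoQ (A θ x y₁ y₂)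
          * (τ⁻¹ * (z (x, y₁) - z (x, y₂))) ^ 2
        = ∑ p : Y × Y, D x * ((Fintype.card Y : ℝ) ^ 2)⁻¹ * dpoQ (A θ x p.1 p.2)
          * (τ⁻¹ * (z (x, p.1) - z (x, p.2))) ^ 2 :=
            (Fintype.sum_prod_type (f := fun p : Y × Y =>
              D x * ((Fintype.card Y : ℝ) ^ 2)⁻¹ * dpoQ (A θ x p.1 p.2)
                * (τ⁻¹ * (z (x, p.1) - z (x, p.2))) ^ 2)).symm
      _ ≤ ∑ p : Y × Y, D x * ((Fintype.card Y : ℝ) ^ 2)⁻¹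
          * ((if p ∈ Ω θ x then c₀ + 1 else 1) * (2 * τ⁻¹ ^ 2 * Z x)) := by
          refine Finset.sum_le_sum fun p _ => ?_
          rw [mul_assoc]
          refine mul_le_mul_of_nonneg_left ?_ hw0
          have hqb : dpoQ (A θ x p.1 p.2) ≤ (if p ∈ Ω θ x then c₀ + 1 else 1) := by
            by_cases h : p ∈ Ω θ x
            · rw [if_pos h]; exact hQΩ x p.1 p.2 h
            · rw [if_neg h]; exact dpoQ_le_one _
          have hsq : (τ⁻¹ * (z (x, p.1) - z (x, p.2))) ^ 2 ≤ 2 * τ⁻¹ ^ 2 * Z x := by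
            rw [mul_pow]
            calc τ⁻¹ ^ 2 * (z (x, p.1) - z (x, p.2)) ^ 2
                ≤ τ⁻¹ ^ 2 * (2 * Z x) :=
                  mul_le_mul_of_nonneg_left (hd2 x p.1 p.2) (by positivity)
              _ = 2 * τ⁻¹ ^ 2 * Z x := by ring
          have hb0 : (0:ℝ) ≤ (if p ∈ Ω θ x then c₀ + 1 else 1) := by
            by_cases h : p ∈ Ω θ x
            · rw [if_pos h]; linarith
            · rw [if_neg h]; norm_num
          exact mul_le_mul hqb hsq (sq_nonneg _) hb0
      _ = D x * ((Fintype.card Y : ℝ) ^ 2)⁻¹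
          * (((Fintype.card Y : ℝ) ^ 2 + ((Ω θ x).card : ℝ) * c₀) * (2 * τ⁻¹ ^ 2 * Z x)) := by
          rw [← Finset.mul_sum, ← Finset.sum_mul, hb]
      _ ≤ D x * ((Fintype.card Y : ℝ) ^ 2)⁻¹
          * (((Fintype.card Y : ℝ) ^ 2 * (1 + γ * c₀)) * (2 * τ⁻¹ ^ 2 * Z x)) := by
          refine mul_le_mul_of_nonneg_left ?_ hw0
          refine mul_le_mul_of_nonneg_right ?_ (by positivity)
          have h := mul_le_mul_of_nonpos_right (hΩcard x) (le_of_lt hc₀mem.2)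
          nlinarith
      _ = D x * (1 + γ * c₀) * (2 * τ⁻¹ ^ 2 * Z x) := by
          field_simp
  have hterm0 : ∀ x (y₁ y₂ : Y), 0 ≤ D x * ((Fintype.card Y : ℝ) ^ 2)⁻¹
      * dpoQ (A θ x y₁ y₂) * (τ⁻¹ * (z (x, y₁) - z (x, y₂))) ^ 2 := by
    intro x y₁ y₂
    exact mul_nonneg (mul_nonneg (mul_nonneg (hD0 x) (by positivity)) (dpoQ_pos _).le)
      (sq_nonneg _)
  rw [abs_of_nonneg (Finset.sum_nonneg fun x _ => Finset.sum_nonneg fun y₁ _ =>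
    Finset.sum_nonneg fun y₂ _ => hterm0 x y₁ y₂)]
  have hSZ : ∑ p : X × Y, z p ^ 2 = ∑ x : X, Z x := by
    rw [Fintype.sum_prod_type]
  have hS0 : 0 ≤ ∑ p : X × Y, z p ^ 2 := Finset.sum_nonneg fun p _ => sq_nonneg _
  calc ∑ x : X, ∑ y₁ : Y, ∑ y₂ : Y,
        D x * ((Fintype.card Y : ℝ) ^ 2)⁻¹ * dpoQ (A θ x y₁ y₂)
          * (τ⁻¹ * (z (x, y₁) - z (x, y₂))) ^ 2
      ≤ ∑ x : X, D x * (1 + γ * c₀) * (2 * τ⁻¹ ^ 2 * Z x) :=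
        Finset.sum_le_sum fun x _ => hinner x
    _ ≤ ∑ x : X, (1 + γ * c₀) * (2 * τ⁻¹ ^ 2 * Z x) := by
        refine Finset.sum_le_sum fun x _ => ?_
        have hDle1 : D x ≤ 1 := by
          rw [← hD1]
          exact Finset.single_le_sum (fun i _ => hD0 i) (Finset.mem_univ x)
        have hfac : 0 ≤ (1 + γ * c₀) * (2 * τ⁻¹ ^ 2 * Z x) :=
          mul_nonneg h1γc (by positivity)
        nlinarith [mul_le_mul_of_nonneg_right hDle1 hfac]
    _ = (1 + γ * c₀) * (2 * τ⁻¹ ^ 2) * ∑ p : X × Y, z p ^ 2 := by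
        rw [hSZ, Finset.mul_sum]
        exact Finset.sum_congr rfl fun x _ => by ring
    _ ≤ (4 * (γ * c₀ + 1) / τ ^ 2) * ∑ p : X × Y, z p ^ 2 := by
        refine mul_le_mul_of_nonneg_right ?_ hS0
        rw [div_eq_mul_inv, ← inv_pow]
        nlinarith [pow_pos (inv_pos.2 hτ) 2]





/-- With uniform offline sampling π₀, at every parameter θ whose large-
margin-agreement fraction γ(θ,x) = |Ω(θ,x)|/K² is at least γ for all x, the second
derivative of the DPO loss satisfies
|D²L_DPO(θ)(z,z)| ≤ (4·(γ·c₀ + 1)/τ²)·Σ_{x,y} z(x,y)², where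
c₀ = σ(ε₀/τ)·σ(−ε₀/τ) − 1. -/
theorem dpo_data_selection_smoothness
    {X Y : Type*} [Fintype X] [Fintype Y] [Nonempty X] [Nonempty Y]
    (r : X → Y → ℝ) (τ : ℝ) (hτ : 0 < τ)
    (D : X → ℝ) (hD0 : ∀ x, 0 ≤ D x) (hD1 : ∑ x : X, D x = 1)
    (πref π₀ : X → Y → ℝ)
    (hπref0 : ∀ x y, 0 < πref x y) (hπref1 : ∀ x, ∑ y : Y, πref x y = 1)
    (hπ₀uniform : ∀ x y, π₀ x y = 1 / (Fintype.card Y : ℝ))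
    (σ : ℝ → ℝ) (hσ : ∀ t, σ t = (1 + Real.exp (-t))⁻¹)
    (pstar : X → Y → Y → ℝ)
    (hpstar : ∀ x y₁ y₂, pstar x y₁ y₂ = σ (r x y₁ - r x y₂))
    (πθ : (X × Y → ℝ) → X → Y → ℝ)
    (hπθ : ∀ θ x y, πθ θ x y = Real.exp (θ (x, y)) / ∑ y' : Y, Real.exp (θ (x, y')))
    (hbar : (X × Y → ℝ) → X → Y → Y → ℝ)
    (hhbar : ∀ θ x y₁ y₂, hbar θ x y₁ y₂ =
      (1 / τ) * (Real.log (πθ θ x y₁ / πref x y₁) - Real.log (πθ θ x y₂ / πref x y₂)))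
    (L : (X × Y → ℝ) → ℝ)
    (hL : ∀ θ, L θ = -∑ x : X, D x * ∑ y₁ : Y, ∑ y₂ : Y,
      π₀ x y₁ * π₀ x y₂ *
        (pstar x y₁ y₂ * Real.log (σ (hbar θ x y₁ y₂)) +
         (1 - pstar x y₁ y₂) * Real.log (σ (-(hbar θ x y₁ y₂)))))
    (ε₀ : ℝ) (hε₀ : 0 < ε₀)
    (c₀ : ℝ) (hc₀ : c₀ = σ (ε₀ / τ) * σ (-(ε₀ / τ)) - 1)
    (hc₀mem : -1 < c₀ ∧ c₀ < 0)
    (Ω : (X × Y → ℝ) → X → Finset (Y × Y))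
    (hΩ : ∀ θ x (p : Y × Y), p ∈ Ω θ x ↔
      ε₀ ≤ |Real.log (pstar x p.1 p.2 / (1 - pstar x p.1 p.2))| ∧
      ε₀ ≤ |Real.log (πθ θ x p.1 * πref x p.2 / (πθ θ x p.2 * πref x p.1))|)
    (γ : ℝ) (hγ0 : 0 ≤ γ) (hγ1 : γ ≤ 1)
    (θ : X × Y → ℝ)
    (hγθ : ∀ x, γ ≤ ((Ω θ x).card : ℝ) / (Fintype.card Y : ℝ) ^ 2) :
    ∀ z : X × Y → ℝ,
      |fderiv ℝ (fderiv ℝ L) θ z z| ≤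
        (4 * (γ * c₀ + 1) / τ ^ 2) * ∑ p : X × Y, z p ^ 2 :=
  dpo_data_selection_smoothness_aux r τ hτ D hD0 hD1 πref π₀ hπref0 hπref1 hπ₀uniform
    σ hσ pstar hpstar πθ hπθ hbar hhbar L hL ε₀ hε₀ c₀ hc₀ hc₀mem Ω hΩ γ hγ0 hγ1 θ hγθ
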